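/- Let z¹, z² be families of vectors indexed by {1,...,N}, τ, τ_m > 0, and λ ∈ [0,1]. Define p¹_{ik} = exp(z¹_i·z²_k/τ) / Σ_j exp(z¹_i·z²_j/τ), p²_{ik} = 1_{i≠k} exp(z²_i·z²_k/τ_m) / Σ_j 1_{i≠j} exp(z²_i·z²_j/τ_m), and w²_{ik} = λ·1_{i=k} + (1−λ)·p²_{ik}. Then L_SCE = −(1/N) Σ_i Σ_k w²_{ik} log p¹_{ik} equals λ·L_InfoNCE + (1−λ)·L_ReSSL + (1−λ)·L_ceil, where L_InfoNCE = −(1/N) Σ_i log p¹_{ii}, L_ReSSL = −(1/N) Σ_i Σ_k p²_{ik} log( 1_{i≠k} exp(z¹_i·z²_k/τ) / Σ_j 1_{i≠j} exp(z¹_i·z²_j/τ) ), and L_ceil = −(1/N) Σ_i log( Σ_j 1_{i≠j} exp(z¹_i·z²_j/τ) / Σ_j exp(z¹_i·z²_j/τ) ). -/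
import Mathlib


open Finset Real

theorem stmt_0 (N d : ℕ) (hN : 2 ≤ N) (z1 z2 : Fin N → Fin d → ℝ)
    (τ τm lam : ℝ) (hτ : 0 < τ) (hτm : 0 < τm) (hlam : lam ∈ Set.Icc (0:ℝ) 1)
    (p1 p2 w2 : Fin N → Fin N → ℝ)
    (hp1 : ∀ i k, p1 i k =
      Real.exp ((∑ t, z1 i t * z2 k t) / τ) /
        ∑ j, Real.exp ((∑ t, z1 i t * z2 j t) / τ))
    (hp2 : ∀ i k, p2 i k =
      (if i ≠ k then Real.exp ((∑ t, z2 i t * z2 k t) / τm) else 0) /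
        ∑ j, (if i ≠ j then Real.exp ((∑ t, z2 i t * z2 j t) / τm) else 0))
    (hw2 : ∀ i k, w2 i k = lam * (if i = k then 1 else 0) + (1 - lam) * p2 i k) :
    -(1 / (N:ℝ)) * ∑ i, ∑ k, w2 i k * Real.log (p1 i k) =
      lam * (-(1 / (N:ℝ)) * ∑ i, Real.log (p1 i i)) +
      (1 - lam) * (-(1 / (N:ℝ)) * ∑ i, ∑ k, p2 i k *
        Real.log ((if i ≠ k then Real.exp ((∑ t, z1 i t * z2 k t) / τ) else 0) /
          ∑ j, (if i ≠ j then Real.exp ((∑ t, z1 i t * z2 j t) / τ) else 0))) +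
      (1 - lam) * (-(1 / (N:ℝ)) * ∑ i, Real.log
        ((∑ j, (if i ≠ j then Real.exp ((∑ t, z1 i t * z2 j t) / τ) else 0)) /
          ∑ j, Real.exp ((∑ t, z1 i t * z2 j t) / τ))) := by
  have hNe : ∀ i : Fin N, ∃ k : Fin N, i ≠ k := by
    haveI : Nontrivial (Fin N) := ⟨⟨⟨0, by omega⟩, ⟨1, by omega⟩, by simp [Fin.ext_iff]⟩⟩
    intro i
    obtain ⟨k, hk⟩ := exists_ne i
    exact ⟨k, hk.symm⟩
  -- positivity of restricted sums
  have hpos : ∀ (f : Fin N → ℝ), (∀ j, 0 < f j) → ∀ i : Fin N,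
      0 < ∑ j, (if i ≠ j then f j else 0) := by
    intro f hf i
    obtain ⟨k, hk⟩ := hNe i
    refine Finset.sum_pos' (fun j _ => by split_ifs; exacts [(hf j).le, le_rfl])
      ⟨k, Finset.mem_univ k, ?_⟩
    simp [hk, hf k]
  have hS : ∀ i : Fin N, 0 < ∑ j, Real.exp ((∑ t, z1 i t * z2 j t) / τ) :=
    fun i => Finset.sum_pos (fun j _ => Real.exp_pos _) ⟨i, Finset.mem_univ i⟩
  have hS' : ∀ i : Fin N, 0 < ∑ j, (if i ≠ j then Real.exp ((∑ t, z1 i t * z2 j t) / τ) else 0) :=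
    fun i => hpos _ (fun j => Real.exp_pos _) i
  have hT' : ∀ i : Fin N, 0 < ∑ j, (if i ≠ j then Real.exp ((∑ t, z2 i t * z2 j t) / τm) else 0) :=
    fun i => hpos _ (fun j => Real.exp_pos _) i
  have hp2sum : ∀ i : Fin N, ∑ k, p2 i k = 1 := by
    intro i
    simp only [hp2]
    rw [← Finset.sum_div, div_self (ne_of_gt (hT' i))]
  have hp2diag : ∀ i : Fin N, p2 i i = 0 := by
    intro i; simp [hp2]
  -- per i identity
  have key : ∀ i : Fin N,
      ∑ k, w2 i k * Real.log (p1 i k) =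
        lam * Real.log (p1 i i) +
        (1 - lam) * ∑ k, p2 i k *
          Real.log ((if i ≠ k then Real.exp ((∑ t, z1 i t * z2 k t) / τ) else 0) /
            ∑ j, (if i ≠ j then Real.exp ((∑ t, z1 i t * z2 j t) / τ) else 0)) +
        (1 - lam) * Real.log
          ((∑ j, (if i ≠ j then Real.exp ((∑ t, z1 i t * z2 j t) / τ) else 0)) /
            ∑ j, Real.exp ((∑ t, z1 i t * z2 j t) / τ)) := by
    intro i
    set C := Real.log
          ((∑ j, (if i ≠ j then Real.exp ((∑ t, z1 i t * z2 j t) / τ) else 0)) /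
            ∑ j, Real.exp ((∑ t, z1 i t * z2 j t) / τ)) with hC
    have step : ∀ k, p2 i k * Real.log (p1 i k) =
        p2 i k * (Real.log ((if i ≠ k then Real.exp ((∑ t, z1 i t * z2 k t) / τ) else 0) /
            ∑ j, (if i ≠ j then Real.exp ((∑ t, z1 i t * z2 j t) / τ) else 0)) + C) := by
      intro k
      by_cases hik : i = k
      · subst hik; simp [hp2diag]
      · congr 1
        rw [hp1, if_pos hik, hC,
          Real.log_div (Real.exp_ne_zero _) (ne_of_gt (hS i)),
          Real.log_div (Real.exp_ne_zero _) (ne_of_gt (hS' i)),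
          Real.log_div (ne_of_gt (hS' i)) (ne_of_gt (hS i))]
        ring
    have hw2sum : ∑ k, w2 i k * Real.log (p1 i k) =
        lam * Real.log (p1 i i) + (1 - lam) * ∑ k, p2 i k * Real.log (p1 i k) := by
      simp only [hw2, add_mul, Finset.sum_add_distrib, mul_assoc]
      rw [← Finset.mul_sum, ← Finset.mul_sum]
      congr 1
      simp [ite_mul]
    rw [hw2sum]
    have : ∑ k, p2 i k * Real.log (p1 i k) =
        (∑ k, p2 i k *
          Real.log ((if i ≠ k then Real.exp ((∑ t, z1 i t * z2 k t) / τ) else 0) /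
            ∑ j, (if i ≠ j then Real.exp ((∑ t, z1 i t * z2 j t) / τ) else 0))) + C := by
      rw [Finset.sum_congr rfl (fun k _ => step k)]
      simp only [mul_add, Finset.sum_add_distrib, ← Finset.sum_mul, hp2sum i, one_mul]
    rw [this]; ring
  rw [Finset.sum_congr rfl (fun i _ => key i)]
  simp only [Finset.sum_add_distrib, ← Finset.mul_sum]
  ring
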